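/- (Kreĭn) Let S be a positive, closed, densely defined symmetric operator on a complex Hilbert space H with Cayley transform T = (I−S)(I+S)^{-1} on dom(T) = ran(I+S). Then the Cayley transform is a bijection from the set 𝒮 of all positive selfadjoint operators S̃ on H extending S onto the set 𝒯 of all everywhere-defined selfadjoint contractions T̃ on H with T̃|dom(T) = T. -/

import Mathlib

open scoped InnerProductSpace ComplexOrder
open Filter Topology

noncomputable section

variable {H : Type*} [NormedAddCommGroup H] [InnerProductSpace ℂ H] [CompleteSpace H]

set_option linter.unusedSectionVars false


lemma mem_adjoint_graph_iff (T : H →ₗ.[ℂ] H) (hT : Dense (T.domain : Set H)) (k w : H) :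
    (k, w) ∈ T.adjoint.graph ↔ ∀ x : T.domain, ⟪w, (x : H)⟫_ℂ = ⟪k, T x⟫_ℂ := by
  constructor
  · rintro hmem x
    rw [LinearPMap.mem_graph_iff] at hmem
    obtain ⟨y, hy1, hy2⟩ := hmem
    have := T.adjoint_isFormalAdjoint hT y x
    rw [hy2, hy1] at this
    exact this
  · intro h
    have hk : k ∈ T.adjoint.domain := LinearPMap.mem_adjoint_domain_of_exists k ⟨w, h⟩
    have : T.adjoint ⟨k, hk⟩ = w := LinearPMap.adjoint_apply_eq hT _ h
    have hm := T.adjoint.mem_graph ⟨k, hk⟩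
    rwa [this] at hm

lemma adjoint_graph_isClosed (T : H →ₗ.[ℂ] H) (hT : Dense (T.domain : Set H)) :
    T.adjoint.IsClosed := by
  have : (T.adjoint.graph : Set (H × H)) =
      ⋂ x : T.domain, {p : H × H | ⟪p.2, (x : H)⟫_ℂ = ⟪p.1, T x⟫_ℂ} := by
    ext ⟨k, w⟩
    simp only [SetLike.mem_coe, mem_adjoint_graph_iff T hT, Set.mem_iInter, Set.mem_setOf_eq]
  rw [LinearPMap.IsClosed, this]
  exact isClosed_iInter fun x => isClosed_eq
    (Continuous.inner continuous_snd continuous_const)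
    (Continuous.inner continuous_fst continuous_const)

lemma selfadjoint_isFormalAdjoint (T : H →ₗ.[ℂ] H) (hT : Dense (T.domain : Set H))
    (hsa : T.adjoint = T) : T.IsFormalAdjoint T := by
  have := T.adjoint_isFormalAdjoint hT
  rwa [hsa] at this

lemma re_nonneg_of_nonneg {z : ℂ} (h : 0 ≤ z) : 0 ≤ z.re := by
  rw [Complex.le_def] at h; exact h.1

lemma norm_le_norm_add {a b : H} (hab : 0 ≤ ⟪b, a⟫_ℂ) : ‖a‖ ≤ ‖a + b‖ := by
  have h1 : ‖a‖ ^ 2 ≤ ‖a + b‖ * ‖a‖ := by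
    have : (‖a‖ : ℝ) ^ 2 = Complex.re ⟪a, a⟫_ℂ := by
      rw [← inner_self_eq_norm_sq (𝕜 := ℂ)]; rfl
    rw [this]
    calc Complex.re ⟪a, a⟫_ℂ ≤ Complex.re ⟪a + b, a⟫_ℂ := by
          rw [inner_add_left]
          simp only [Complex.add_re]
          have := re_nonneg_of_nonneg hab
          linarith
      _ ≤ ‖⟪a + b, a⟫_ℂ‖ := Complex.re_le_norm _
      _ ≤ ‖a + b‖ * ‖a‖ := norm_inner_le_norm _ _
  rcases eq_or_lt_of_le (norm_nonneg a) with h0 | h0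
  · rw [← h0]; exact norm_nonneg _
  · have : ‖a‖ * ‖a‖ ≤ ‖a + b‖ * ‖a‖ := by rw [← sq]; exact h1
    exact le_of_mul_le_mul_right this h0

lemma norm_sub_le_norm_add' {a b : H} (hab : 0 ≤ ⟪b, a⟫_ℂ) : ‖a - b‖ ≤ ‖a + b‖ := by
  have h1 : ‖a + b‖ ^ 2 = ‖a‖ ^ 2 + 2 * Complex.re ⟪a, b⟫_ℂ + ‖b‖ ^ 2 := by
    exact_mod_cast norm_add_sq (𝕜 := ℂ) a b
  have h2 : ‖a - b‖ ^ 2 = ‖a‖ ^ 2 - 2 * Complex.re ⟪a, b⟫_ℂ + ‖b‖ ^ 2 := by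
    exact_mod_cast norm_sub_sq (𝕜 := ℂ) a b
  have h3 : 0 ≤ Complex.re ⟪a, b⟫_ℂ := by
    have : ⟪a, b⟫_ℂ = starRingEnd ℂ ⟪b, a⟫_ℂ := (inner_conj_symm a b).symm
    rw [this, Complex.conj_re]
    exact re_nonneg_of_nonneg hab
  nlinarith [norm_nonneg (a - b), norm_nonneg (a + b)]

lemma cayley_exists (St : H →ₗ.[ℂ] H) (hsa : St.adjoint = St)
    (hpos : ∀ h : St.domain, 0 ≤ ⟪St h, (h : H)⟫_ℂ) :
    ∃ Tt : H →L[ℂ] H, IsSelfAdjoint Tt ∧ ‖Tt‖ ≤ 1 ∧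
      (∀ h : St.domain, Tt ((h : H) + St h) = (h : H) - St h) ∧
      ∀ y : H, ∃ x : St.domain, (x : H) + St x = y := by
  have hsa' : IsSelfAdjoint St := LinearPMap.isSelfAdjoint_def.mpr hsa
  have hdom : Dense (St.domain : Set H) := hsa'.dense_domain
  have hsymm : St.IsFormalAdjoint St := selfadjoint_isFormalAdjoint St hdom hsa
  have hclosed : St.IsClosed := by
    have := adjoint_graph_isClosed St hdom
    rwa [hsa] at this
  set A : St.domain →ₗ[ℂ] H := St.domain.subtype + St.toFun with hA
  have hAx : ∀ x : St.domain, A x = (x : H) + St x := fun x => rfl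
  have hnorm1 : ∀ x : St.domain, ‖(x : H)‖ ≤ ‖A x‖ := fun x =>
    norm_le_norm_add (hpos x)
  have hnorm2 : ∀ x : St.domain, ‖(x : H) - St x‖ ≤ ‖A x‖ := fun x =>
    norm_sub_le_norm_add' (hpos x)
  have hinj : Function.Injective A := by
    intro x y hxy
    have : A (x - y) = 0 := by rw [map_sub, hxy, sub_self]
    have h0 : ‖((x - y : St.domain) : H)‖ ≤ 0 := by
      simpa [this] using hnorm1 (x - y)
    have : ((x - y : St.domain) : H) = 0 := by
      simpa using le_antisymm h0 (norm_nonneg _)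
    have : (x : H) = y := by
      have := sub_eq_zero.mp this
      exact_mod_cast this
    exact Subtype.ext this
  -- range of A is closed
  have hKclosed : IsClosed ((LinearMap.range A : Submodule ℂ H) : Set H) := by
    apply IsSeqClosed.isClosed
    intro f p hf hfp
    choose x hx using hf
    have hCf : CauchySeq f := hfp.cauchySeq
    have hCx : CauchySeq (fun n => ((x n : St.domain) : H)) := by
      rw [Metric.cauchySeq_iff] at hCf ⊢
      intro ε hε
      obtain ⟨N, hN⟩ := hCf ε hε
      refine ⟨N, fun m hm n hn => ?_⟩
      have key : ‖((x m : St.domain) : H) - (x n : St.domain)‖ ≤ ‖f m - f n‖ := by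
        have : A (x m - x n) = f m - f n := by rw [map_sub, hx, hx]
        have h := hnorm1 (x m - x n)
        rw [this] at h
        simpa using h
      rw [dist_eq_norm] at *
      exact lt_of_le_of_lt key (by rw [← dist_eq_norm]; exact hN m hm n hn)
    obtain ⟨h, hh⟩ := cauchySeq_tendsto_of_complete hCx
    have hSt : Filter.Tendsto (fun n => St (x n)) Filter.atTop (nhds (p - h)) := by
      have : ∀ n, St (x n) = f n - ((x n : St.domain) : H) := by
        intro n; rw [← hx n, hAx]; abel
      simp_rw [this]
      exact hfp.sub hh
    have hgraph : (h, p - h) ∈ St.graph := by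
      have hmem : ∀ n, (((x n : St.domain) : H), St (x n)) ∈ (St.graph : Set (H × H)) :=
        fun n => St.mem_graph (x n)
    -- limits stay in closed sets
      exact hclosed.mem_of_tendsto (hh.prodMk_nhds hSt) (Filter.Eventually.of_forall hmem)
    rw [LinearPMap.mem_graph_iff] at hgraph
    obtain ⟨y, hy1, hy2⟩ := hgraph
    refine ⟨y, ?_⟩
    simp only at hy1 hy2
    rw [hAx, hy1, hy2]
    abel
  haveI : CompleteSpace (LinearMap.range A : Submodule ℂ H) := hKclosed.completeSpace_coe
  have hsurj : Function.Surjective A := by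
    have horth : (LinearMap.range A)ᗮ = ⊥ := by
      rw [Submodule.eq_bot_iff]
      intro k hk
      have hk' : ∀ x : St.domain, ⟪(x : H) + St x, k⟫_ℂ = 0 := by
        intro x
        exact (Submodule.mem_orthogonal _ k).mp hk _ ⟨x, rfl⟩
      have hgr : (k, -k) ∈ St.adjoint.graph := by
        rw [mem_adjoint_graph_iff St hdom]
        intro x
        have h0 : ⟪k, (x : H) + St x⟫_ℂ = 0 := by
          rw [← inner_conj_symm, hk' x, map_zero]
        rw [inner_add_right] at h0
        rw [inner_neg_left]
        linear_combination -h0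
      rw [hsa, LinearPMap.mem_graph_iff] at hgr
      obtain ⟨y, hy1, hy2⟩ := hgr
      have := hpos y
      rw [hy2, hy1] at this
      have hre := re_nonneg_of_nonneg this
      rw [inner_neg_left] at hre
      have : Complex.re ⟪k, k⟫_ℂ = ‖k‖ ^ 2 := by
        rw [← inner_self_eq_norm_sq (𝕜 := ℂ)]; rfl
      simp only [Complex.neg_re, this] at hre
      have : ‖k‖ = 0 := by nlinarith [norm_nonneg k]
      exact norm_eq_zero.mp this
    intro y
    have : y ∈ LinearMap.range A := by
      have := Submodule.orthogonal_eq_bot_iff.mp horth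
      rw [this]; trivial
    obtain ⟨x, hxy⟩ := this
    exact ⟨x, hxy⟩
  set E := LinearEquiv.ofBijective A ⟨hinj, hsurj⟩ with hE
  have hEx : ∀ x : St.domain, E x = A x := fun x => rfl
  set B : St.domain →ₗ[ℂ] H := St.domain.subtype - St.toFun with hB
  have hBx : ∀ x : St.domain, B x = (x : H) - St x := fun x => rfl
  set Tt0 : H →ₗ[ℂ] H := B.comp E.symm.toLinearMap with hT0
  have hbound : ∀ y : H, ‖Tt0 y‖ ≤ 1 * ‖y‖ := by
    intro y
    have h1 : A (E.symm y) = y := by rw [← hEx]; exact E.apply_symm_apply y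
    have h2 : Tt0 y = B (E.symm y) := rfl
    rw [h2, one_mul, hBx]
    calc ‖(E.symm y : H) - St (E.symm y)‖ ≤ ‖A (E.symm y)‖ := hnorm2 _
      _ = ‖y‖ := by rw [h1]
  set Tt : H →L[ℂ] H := Tt0.mkContinuous 1 hbound with hTt
  have hTtA : ∀ x : St.domain, Tt ((x : H) + St x) = (x : H) - St x := by
    intro x
    have h1 : Tt ((x : H) + St x) = Tt0 (A x) := rfl
    have h2 : E.symm (A x) = x := by rw [← hEx]; exact E.symm_apply_apply x
    rw [h1, hT0, LinearMap.comp_apply]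
    simp only [LinearEquiv.coe_toLinearMap]
    rw [h2, hBx]
  refine ⟨Tt, ?_, ?_, hTtA, fun y => ?_⟩
  · rw [ContinuousLinearMap.isSelfAdjoint_iff_isSymmetric]
    intro u v
    obtain ⟨x, hx⟩ := hsurj u
    obtain ⟨y, hy⟩ := hsurj v
    rw [hAx] at hx hy
    have h1 : Tt u = (x : H) - St x := by rw [← hx]; exact hTtA x
    have h2 : Tt v = (y : H) - St y := by rw [← hy]; exact hTtA y
    have h3 := hsymm x y
    have h4 : ⟪(x : H), St y⟫_ℂ = ⟪St x, (y : H)⟫_ℂ := h3.symm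
    show ⟪Tt u, v⟫_ℂ = ⟪u, Tt v⟫_ℂ
    rw [h1, h2, ← hx, ← hy]
    simp only [inner_add_left, inner_add_right, inner_sub_left, inner_sub_right]
    linear_combination -2 * h3
  · exact Tt0.mkContinuous_norm_le zero_le_one hbound
  · obtain ⟨x, hx⟩ := hsurj y
    exact ⟨x, by rw [← hAx]; exact hx⟩
lemma inverse_cayley (S : H →ₗ.[ℂ] H) (hdense : Dense (S.domain : Set H))
    (Tt : H →L[ℂ] H) (hsaT : IsSelfAdjoint Tt) (hnormT : ‖Tt‖ ≤ 1)
    (hext : ∀ h : S.domain, Tt ((h : H) + S h) = (h : H) - S h) :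
    ∃ St : H →ₗ.[ℂ] H,
      (S ≤ St ∧ St.adjoint = St ∧ ∀ h : St.domain, 0 ≤ ⟪St h, (h : H)⟫_ℂ) ∧
      (∀ h : St.domain, Tt ((h : H) + St h) = (h : H) - St h) ∧
      (∀ a b : H, Tt (a + b) = a - b → (a, b) ∈ St.graph) := by
  have symmT : ∀ x y : H, ⟪Tt x, y⟫_ℂ = ⟪x, Tt y⟫_ℂ :=
    ContinuousLinearMap.isSelfAdjoint_iff_isSymmetric.mp hsaT
  set L : H →ₗ[ℂ] H × H :=
    LinearMap.prod (LinearMap.id + (Tt : H →ₗ[ℂ] H)) (LinearMap.id - (Tt : H →ₗ[ℂ] H)) with hL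
  have hLx : ∀ g : H, L g = (g + Tt g, g - Tt g) := fun g => rfl
  set G : Submodule ℂ (H × H) := LinearMap.range L with hG
  have hg : ∀ p ∈ G, p.1 = 0 → p.2 = 0 := by
    rintro ⟨a, b⟩ ⟨g, hgab⟩ h1
    rw [hLx] at hgab
    obtain ⟨ha, hb⟩ := Prod.mk.injEq _ _ _ _ ▸ hgab
    simp only at h1 ⊢
    have h0 : g + Tt g = 0 := by rw [ha]; exact h1
    have hzero : g = 0 := by
      apply hdense.eq_zero_of_inner_left (𝕜 := ℂ)
      intro k hk
      lift k to S.domain using hk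
      have e1 : ⟪g + Tt g, (k : H) + S k⟫_ℂ = 0 := by rw [h0, inner_zero_left]
      rw [inner_add_left] at e1
      have e2 : ⟪Tt g, (k : H) + S k⟫_ℂ = ⟪g, (k : H) - S k⟫_ℂ := by
        rw [symmT, hext]
      rw [e2, inner_add_right, inner_sub_right] at e1
      linear_combination (2⁻¹ : ℂ) * e1
    rw [← hb, hzero, map_zero, sub_zero]
  have hmemG : ∀ a b : H, Tt (a + b) = a - b → (a, b) ∈ G := by
    intro a b hab
    refine ⟨(2⁻¹ : ℂ) • (a + b), ?_⟩
    rw [hLx, map_smul, hab, Prod.mk.injEq]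
    constructor
    · rw [← smul_add]
      have : (a + b) + (a - b) = (2 : ℂ) • a := by
        rw [two_smul]; abel
      rw [this, smul_smul]
      norm_num
    · rw [← smul_sub]
      have : (a + b) - (a - b) = (2 : ℂ) • b := by
        rw [two_smul]; abel
      rw [this, smul_smul]
      norm_num
  set St := G.toLinearPMap with hSt
  have hgraph : St.graph = G := G.toLinearPMap_graph_eq hg
  have hmem : ∀ p : H × H, p ∈ St.graph ↔ ∃ g : H, g + Tt g = p.1 ∧ g - Tt g = p.2 := by
    intro p
    rw [hgraph]
    constructor
    · rintro ⟨g, hgp⟩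
      rw [hLx] at hgp
      exact ⟨g, by rw [← hgp], by rw [← hgp]⟩
    · rintro ⟨g, h1, h2⟩
      exact ⟨g, by rw [hLx, h1, h2]⟩
  -- S ≤ St
  have hle : S ≤ St := by
    apply LinearPMap.le_of_le_graph
    intro p hp
    rw [LinearPMap.mem_graph_iff] at hp
    obtain ⟨x, hx1, hx2⟩ := hp
    rw [hgraph]
    obtain ⟨p1, p2⟩ := p
    simp only at hx1 hx2
    apply hmemG
    rw [← hx1, ← hx2]
    exact hext x
  -- the Cayley relation
  have hcayley : ∀ h : St.domain, Tt ((h : H) + St h) = (h : H) - St h := by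
    intro h
    obtain ⟨g, h1, h2⟩ := (hmem _).mp (St.mem_graph h)
    simp only at h1 h2
    rw [← h1, ← h2]
    have e1 : g + Tt g + (g - Tt g) = (2 : ℂ) • g := by rw [two_smul]; abel
    have e2 : g + Tt g - (g - Tt g) = (2 : ℂ) • Tt g := by rw [two_smul]; abel
    rw [e1, e2, map_smul]
  -- positivity
  have hpos : ∀ h : St.domain, 0 ≤ ⟪St h, (h : H)⟫_ℂ := by
    intro h
    obtain ⟨g, h1, h2⟩ := (hmem _).mp (St.mem_graph h)
    simp only at h1 h2
    have ofreal_eq : ∀ r : ℝ, ((r : ℂ)) = Complex.ofReal r := fun r => rfl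
    have key : ⟪St h, (h : H)⟫_ℂ = ((‖g‖ ^ 2 - ‖Tt g‖ ^ 2 : ℝ) : ℂ) := by
      rw [← h1, ← h2]
      have e3 : ⟪Tt g, g⟫_ℂ = ⟪g, Tt g⟫_ℂ := symmT g g
      simp only [inner_sub_left, inner_add_right]
      rw [inner_self_eq_norm_sq_to_K (𝕜 := ℂ), inner_self_eq_norm_sq_to_K (𝕜 := ℂ)]
      push_cast
      linear_combination (norm := (simp only [RCLike.ofReal_alg, Complex.real_smul, Complex.ofReal_sub, Complex.ofReal_pow]; push_cast; ring_nf)) -e3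
    rw [key, Complex.zero_le_real, sub_nonneg]
    have hTg : ‖Tt g‖ ≤ ‖g‖ := by
      calc ‖Tt g‖ ≤ ‖Tt‖ * ‖g‖ := Tt.le_opNorm g
        _ ≤ 1 * ‖g‖ := by
            apply mul_le_mul_of_nonneg_right hnormT (norm_nonneg g)
        _ = ‖g‖ := one_mul _
    exact pow_le_pow_left₀ (norm_nonneg _) hTg 2
  -- dense domain
  have hdomSt : Dense (St.domain : Set H) := by
    apply hdense.mono
    exact_mod_cast hle.1
  -- symmetric
  have hsymmSt : St.IsFormalAdjoint St := by
    intro x y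
    obtain ⟨gx, hx1, hx2⟩ := (hmem _).mp (St.mem_graph x)
    obtain ⟨gy, hy1, hy2⟩ := (hmem _).mp (St.mem_graph y)
    simp only at hx1 hx2 hy1 hy2
    rw [← hx1, ← hx2, ← hy1, ← hy2]
    have e3 : ⟪Tt gx, gy⟫_ℂ = ⟪gx, Tt gy⟫_ℂ := symmT gx gy
    have e4 : ⟪Tt gx, Tt gy⟫_ℂ = ⟪Tt gx, Tt gy⟫_ℂ := rfl
    simp only [inner_sub_left, inner_add_left, inner_add_right, inner_sub_right]
    linear_combination -2 * e3
  -- selfadjoint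
  have hsa : St.adjoint = St := by
    apply le_antisymm
    · apply LinearPMap.le_of_le_graph
      rintro ⟨k, w⟩ hkw
      rw [mem_adjoint_graph_iff St hdomSt] at hkw
      have key : ∀ u : H, ⟪w, u + Tt u⟫_ℂ = ⟪k, u - Tt u⟫_ℂ := by
        intro u
        obtain ⟨x, hx1, hx2⟩ := (St.mem_graph_iff).mp ((hmem (u + Tt u, u - Tt u)).mpr ⟨u, rfl, rfl⟩)
        have := hkw x
        simp only at hx1 hx2
        rw [hx2, hx1] at this
        exact this
      have main : w + Tt w = k - Tt k := by
        apply ext_inner_right (𝕜 := ℂ)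
        intro u
        have := key u
        rw [inner_add_right, inner_sub_right] at this
        rw [inner_add_left, inner_sub_left]
        have e5 : ⟪w, Tt u⟫_ℂ = ⟪Tt w, u⟫_ℂ := (symmT w u).symm
        have e6 : ⟪k, Tt u⟫_ℂ = ⟪Tt k, u⟫_ℂ := (symmT k u).symm
        rw [e5, e6] at this
        linear_combination this
      rw [hgraph]
      apply hmemG
      have e7 : Tt w + Tt k = k - w := by
        calc Tt w + Tt k = (w + Tt w) + Tt k - w := by abel
          _ = (k - Tt k) + Tt k - w := by rw [main]
          _ = k - w := by abel
      rw [map_add, add_comm]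
      exact e7
    · exact hsymmSt.le_adjoint hdomSt
  refine ⟨St, ⟨hle, hsa, hpos⟩, hcayley, ?_⟩
  intro a b hab
  rw [hgraph]
  exact hmemG a b hab

/-- (Kreĭn) Let `S` be a positive, closed, densely defined symmetric operator on a complex
Hilbert space `H` with Cayley transform `T = (I−S)(I+S)⁻¹` on `dom T = ran (I+S)`. Then the
Cayley transform is a bijection from the set `𝒮` of all positive selfadjoint operators `S̃`
on `H` extending `S` onto the set `𝒯` of all everywhere defined selfadjoint contractions
`T̃` on `H` with `T̃|dom T = T`, where `T̃ = C(S̃)` means `T̃ ((I+S̃)h) = (I−S̃)h` for all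
`h ∈ dom S̃`. -/
theorem statement7 (S : H →ₗ.[ℂ] H) (hdense : Dense (S.domain : Set H))
    (hclosed : S.IsClosed)
    (hsymm : ∀ h g : S.domain, ⟪S h, (g : H)⟫_ℂ = ⟪(h : H), S g⟫_ℂ)
    (hpos : ∀ h : S.domain, 0 ≤ ⟪S h, (h : H)⟫_ℂ) :
    (∀ St : H →ₗ.[ℂ] H,
      (S ≤ St ∧ St.adjoint = St ∧ ∀ h : St.domain, 0 ≤ ⟪St h, (h : H)⟫_ℂ) →
      ∃! Tt : H →L[ℂ] H,
        (IsSelfAdjoint Tt ∧ ‖Tt‖ ≤ 1 ∧ ∀ h : S.domain, Tt ((h : H) + S h) = (h : H) - S h) ∧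
        ∀ h : St.domain, Tt ((h : H) + St h) = (h : H) - St h) ∧
    (∀ Tt : H →L[ℂ] H,
      (IsSelfAdjoint Tt ∧ ‖Tt‖ ≤ 1 ∧ ∀ h : S.domain, Tt ((h : H) + S h) = (h : H) - S h) →
      ∃! St : H →ₗ.[ℂ] H,
        (S ≤ St ∧ St.adjoint = St ∧ ∀ h : St.domain, 0 ≤ ⟪St h, (h : H)⟫_ℂ) ∧
        ∀ h : St.domain, Tt ((h : H) + St h) = (h : H) - St h) := by
  constructor
  · rintro St ⟨hle, hsa, hposSt⟩
    obtain ⟨Tt, hTsa, hTnorm, hTrel, hTsurj⟩ := cayley_exists St hsa hposSt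
    have hTS : ∀ h : S.domain, Tt ((h : H) + S h) = (h : H) - S h := by
      intro h
      have hmem : (h : H) ∈ St.domain := hle.1 h.2
      have heq : S h = St ⟨(h : H), hmem⟩ := hle.2 rfl
      rw [heq]
      exact hTrel ⟨(h : H), hmem⟩
    refine ⟨Tt, ⟨⟨hTsa, hTnorm, hTS⟩, hTrel⟩, ?_⟩
    rintro Tt' ⟨_, hTrel'⟩
    ext y
    obtain ⟨x, hx⟩ := hTsurj y
    rw [← hx, hTrel' x, hTrel x]
  · rintro Tt ⟨hTsa, hTnorm, hTS⟩
    obtain ⟨St, ⟨hle, hsa, hposSt⟩, hrel, hclosureG⟩ :=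
      inverse_cayley S hdense Tt hTsa hTnorm hTS
    have hdomSt : Dense (St.domain : Set H) :=
      (LinearPMap.isSelfAdjoint_def.mpr hsa).dense_domain
    refine ⟨St, ⟨⟨hle, hsa, hposSt⟩, hrel⟩, ?_⟩
    rintro St' ⟨⟨hle', hsa', hposSt'⟩, hrel'⟩
    have hdomSt' : Dense (St'.domain : Set H) :=
      (LinearPMap.isSelfAdjoint_def.mpr hsa').dense_domain
    have hle'St : St' ≤ St := by
      apply LinearPMap.le_of_le_graph
      intro p hp
      obtain ⟨x, hx1, hx2⟩ := (St'.mem_graph_iff).mp hp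
      obtain ⟨p1, p2⟩ := p
      simp only at hx1 hx2
      apply hclosureG
      rw [← hx1, ← hx2]
      exact hrel' x
    have hsymmSt : St.IsFormalAdjoint St := selfadjoint_isFormalAdjoint St hdomSt hsa
    have hfa : St'.IsFormalAdjoint St := by
      intro x y
      have hmem : (x : H) ∈ St.domain := hle'St.1 x.2
      have heq : St' x = St ⟨(x : H), hmem⟩ := hle'St.2 rfl
      rw [heq]
      exact hsymmSt ⟨(x : H), hmem⟩ y
    have hStle : St ≤ St' := by
      have := hfa.le_adjoint hdomSt'
      rwa [hsa'] at this
    exact le_antisymm hle'St hStle
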